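/- Let 𝔽_q be a finite field with q elements, n ≥ m ≥ 1, E a finite nonempty set, and P^{AE} a sub-distribution on 𝔽_q^n × E. Let (f_x : 𝔽_q^n → 𝔽_q^m)_{x∈X} be an ensemble of surjective linear maps over a finite probability space (X,w) that is ε-almost dual universal₂: Pr_X[ y ∈ (ker f_X)^⊥ ] ≤ ε·q^{m−n} for every nonzero y. Set M := q^m. Then for every s ∈ (0, 1/2], E_X [ d₁'(f_X(A)|E|P^{AE}) ] ≤ (2 + √ε) · M^s · Σ_{e∈E} ( Σ_{a∈𝔽_q^n} P^{AE}(a,e)^{1/(1-s)} )^{1-s} = (2+√ε)·M^s·e^{φ(s|A|E|P^{AE})}. -/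

import Mathlib

open scoped BigOperators

open Classical in
/-- Probability of the event `p` with respect to the weight `w` on a finite index set. -/
noncomputable def prOf {X : Type*} [Fintype X] (w : X → ℝ) (p : X → Prop) : ℝ :=
  ∑ x, if p x then w x else 0

open Classical in
/-- Pushforward `P^{f(A),E}(b,e) = Σ_{a : f(a)=b} P^{AE}(a,e)`. -/
noncomputable def push {A B E : Type*} [Fintype A] (f : A → B) (P : A × E → ℝ)
    (b : B) (e : E) : ℝ :=
  ∑ a, if f a = b then P (a, e) else 0


open Finset

section Char
variable {F : Type*} [Field F] [Fintype F]

noncomputable def ch (φ : Multiplicative F →* ℂˣ) (t : F) : ℂ := φ (Multiplicative.ofAdd t)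

lemma ch_add (φ : Multiplicative F →* ℂˣ) (a b : F) :
    ch φ (a + b) = ch φ a * ch φ b := by
  simp only [ch, ← Units.val_mul, ← map_mul]
  norm_cast

lemma ch_zero (φ : Multiplicative F →* ℂˣ) : ch φ 0 = 1 := by
  simp only [ch]
  norm_cast
  simp

lemma ch_norm (φ : Multiplicative F →* ℂˣ) (t : F) : ‖ch φ t‖ = 1 := by
  haveI : Finite (Multiplicative F) := inferInstanceAs (Finite F)
  set k := Monoid.exponent (Multiplicative F) with hk
  have hk0 : k ≠ 0 := Monoid.exponent_ne_zero_of_finite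
  have h : (ch φ t) ^ k = 1 := by
    have := Monoid.pow_exponent_eq_one (φ (Multiplicative.ofAdd t))
    calc (ch φ t) ^ k = ((φ (Multiplicative.ofAdd t))^k : ℂˣ) := by
          simp [ch, Units.val_pow_eq_pow_val]
      _ = 1 := by rw [← map_pow, Monoid.pow_exponent_eq_one]; simp
  have := congrArg norm h
  rw [norm_pow, norm_one] at this
  rcases lt_trichotomy ‖ch φ t‖ 1 with h1 | h1 | h1
  · exact absurd this (by have := pow_lt_one₀ (norm_nonneg _) h1 hk0; linarith)
  · exact h1
  · exact absurd this (by have := one_lt_pow₀ h1 hk0; linarith)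

lemma ch_conj (φ : Multiplicative F →* ℂˣ) (t : F) :
    (starRingEnd ℂ) (ch φ t) = ch φ (-t) := by
  have h1 : ch φ t * ch φ (-t) = 1 := by rw [← ch_add]; simp [ch_zero]
  have h2 : ch φ t * (starRingEnd ℂ) (ch φ t) = 1 := by
    rw [Complex.mul_conj]
    norm_cast
    simp [Complex.normSq_eq_norm_sq, ch_norm]
  have hne : ch φ t ≠ 0 := by
    intro h; rw [h] at h2; simp at h2
  rw [← h1] at h2
  exact mul_left_cancel₀ hne h2

end Char

noncomputable def dotp {F : Type*} [Field F] {n : ℕ} (v y : Fin n → F) : F := ∑ i, v i * y i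

section A
variable {F : Type*} [Field F] [Fintype F] {n : ℕ}

lemma dotp_add (v y z : Fin n → F) : dotp v (y + z) = dotp v y + dotp v z := by
  simp [dotp, mul_add, Finset.sum_add_distrib]

lemma dotp_zero (v : Fin n → F) : dotp v 0 = 0 := by simp [dotp]

/-- the set of `y` orthogonal to all of `C`, as a submodule -/
def dualSub (C : Submodule F (Fin n → F)) : Submodule F (Fin n → F) where
  carrier := {y | ∀ v ∈ C, dotp v y = 0}
  zero_mem' := by intro v _; simp [dotp]
  add_mem' := by
    intro y z hy hz v hv
    rw [dotp_add, hy v hv, hz v hv, add_zero]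
  smul_mem' := by
    intro c y hy v hv
    have : dotp v (c • y) = c * dotp v y := by
      simp [dotp, Finset.mul_sum]; congr 1; funext i; ring
    rw [this, hy v hv, mul_zero]

variable (φ : Multiplicative F →* ℂˣ)

open Classical in
lemma charSum_eq (W : Submodule F (Fin n → F)) (v : Fin n → F) :
    (∑ y ∈ univ.filter (· ∈ W), ch φ (dotp v y)) =
      if ∀ y ∈ W, ch φ (dotp v y) = 1 then ((univ.filter (· ∈ W)).card : ℂ) else 0 := by
  classical
  by_cases h : ∀ y ∈ W, ch φ (dotp v y) = 1
  · rw [if_pos h]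
    rw [Finset.sum_congr rfl (fun y hy => h y (by simpa using hy))]
    simp
  · rw [if_neg h]
    push_neg at h
    obtain ⟨y₀, hy₀W, hy₀⟩ := h
    set S := ∑ y ∈ univ.filter (· ∈ W), ch φ (dotp v y) with hS
    have key : S * ch φ (dotp v y₀) = S := by
      rw [hS, Finset.sum_mul]
      rw [Finset.sum_congr rfl (fun y _ => by rw [← ch_add, ← dotp_add])]
      apply Finset.sum_nbij' (fun y => y + y₀) (fun y => y - y₀)
      · intro y hy; simp only [mem_filter, mem_univ, true_and] at hy ⊢
        exact W.add_mem hy hy₀W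
      · intro y hy; simp only [mem_filter, mem_univ, true_and] at hy ⊢
        exact W.sub_mem hy hy₀W
      · intro y _; abel
      · intro y _; abel
      · intro y _; rfl
    have : S * (ch φ (dotp v y₀) - 1) = 0 := by ring_nf; linear_combination key - S
    rcases mul_eq_zero.mp this with h | h
    · exact h
    · exact absurd (by linear_combination h) hy₀
end A
section B
variable {F : Type*} [Field F] [Fintype F] {n : ℕ} (φ : Multiplicative F →* ℂˣ)

lemma dotp_sub_left (a a' y : Fin n → F) : dotp (a - a') y = dotp a y - dotp a' y := by
  simp [dotp, sub_mul, Finset.sum_sub_distrib]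

noncomputable def qhat (Q : (Fin n → F) → ℝ) (y : Fin n → F) : ℂ :=
  ∑ a, (Q a : ℂ) * ch φ (dotp a y)

open Classical in
lemma sum_normSq_qhat (W : Submodule F (Fin n → F)) (Q : (Fin n → F) → ℝ) :
    ∑ y ∈ univ.filter (· ∈ W), ‖qhat φ Q y‖ ^ 2 =
      ((univ.filter (· ∈ W)).card : ℝ) *
        ∑ a, ∑ a', (if ∀ y ∈ W, ch φ (dotp (a - a') y) = 1 then Q a * Q a' else 0) := by
  classical
  have key : ((∑ y ∈ univ.filter (· ∈ W), ‖qhat φ Q y‖ ^ 2 : ℝ) : ℂ) =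
      (((univ.filter (· ∈ W)).card : ℝ) *
        ∑ a, ∑ a', (if ∀ y ∈ W, ch φ (dotp (a - a') y) = 1 then Q a * Q a' else 0) : ℝ) := by
    push_cast
    calc ((∑ y ∈ univ.filter (· ∈ W), (‖qhat φ Q y‖:ℂ) ^ 2 : ℂ))
        = ∑ y ∈ univ.filter (· ∈ W), qhat φ Q y * (starRingEnd ℂ) (qhat φ Q y) := by
          refine Finset.sum_congr rfl fun y _ => ?_
          rw [Complex.mul_conj]
          norm_cast
          rw [Complex.normSq_eq_norm_sq]
      _ = ∑ y ∈ univ.filter (· ∈ W), ∑ a, ∑ a',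
            (Q a : ℂ) * (Q a' : ℂ) * ch φ (dotp (a - a') y) := by
          refine Finset.sum_congr rfl fun y _ => ?_
          rw [qhat, map_sum, Finset.sum_mul]
          refine Finset.sum_congr rfl fun a _ => ?_
          rw [Finset.mul_sum]
          refine Finset.sum_congr rfl fun a' _ => ?_
          rw [map_mul, Complex.conj_ofReal, ch_conj, dotp_sub_left]
          rw [show dotp a y - dotp a' y = dotp a y + (- dotp a' y) by ring, ch_add]
          ring
      _ = ∑ a, ∑ a', (Q a : ℂ) * (Q a' : ℂ) *
            ∑ y ∈ univ.filter (· ∈ W), ch φ (dotp (a - a') y) := by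
          rw [Finset.sum_comm]
          refine Finset.sum_congr rfl fun a _ => ?_
          rw [Finset.sum_comm]
          refine Finset.sum_congr rfl fun a' _ => ?_
          rw [Finset.mul_sum]
      _ = ∑ a, ∑ a', ((univ.filter (· ∈ W)).card : ℂ) *
            (if ∀ y ∈ W, ch φ (dotp (a - a') y) = 1 then (Q a : ℂ) * (Q a') else 0) := by
          refine Finset.sum_congr rfl fun a _ => Finset.sum_congr rfl fun a' _ => ?_
          rw [charSum_eq]
          split_ifs <;> ring
      _ = ((univ.filter (· ∈ W)).card : ℂ) * ∑ a, ∑ a',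
            (if ∀ y ∈ W, ch φ (dotp (a - a') y) = 1 then (Q a : ℂ) * (Q a') else 0) := by
          rw [Finset.mul_sum]
          refine Finset.sum_congr rfl fun a _ => ?_
          rw [Finset.mul_sum]
      _ = _ := by
          push_cast
          refine congrArg _ (Finset.sum_congr rfl fun a _ => Finset.sum_congr rfl fun a' _ => ?_)
          split_ifs <;> simp
  exact_mod_cast key

lemma exists_dot_ne_one {t₀ : F} (ht : ch φ t₀ ≠ 1) {v : Fin n → F} (hv : v ≠ 0) :
    ∃ y : Fin n → F, ch φ (dotp v y) ≠ 1 := by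
  classical
  obtain ⟨i, hi⟩ : ∃ i, v i ≠ 0 := by
    by_contra h; push_neg at h; exact hv (funext h)
  refine ⟨Pi.single i ((v i)⁻¹ * t₀), ?_⟩
  have : dotp v (Pi.single i ((v i)⁻¹ * t₀)) = t₀ := by
    rw [dotp, Finset.sum_eq_single i]
    · rw [Pi.single_eq_same]; field_simp
    · intro j _ hj; rw [Pi.single_eq_of_ne hj, mul_zero]
    · intro h; exact absurd (Finset.mem_univ i) h
  rw [this]; exact ht

open Classical in
lemma parseval {t₀ : F} (ht : ch φ t₀ ≠ 1) (Q : (Fin n → F) → ℝ) :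
    ∑ y : Fin n → F, ‖qhat φ Q y‖ ^ 2 = ((Fintype.card F : ℝ) ^ n) * ∑ a, (Q a) ^ 2 := by
  classical
  have h0 : (univ.filter (· ∈ (⊤ : Submodule F (Fin n → F)))) = univ := by
    ext y; simp
  have := sum_normSq_qhat φ (⊤ : Submodule F (Fin n → F)) Q
  rw [h0] at this
  rw [this]
  have hcard : ((univ : Finset (Fin n → F)).card : ℝ) = (Fintype.card F : ℝ) ^ n := by
    rw [Finset.card_univ]
    norm_cast
    simp [Fintype.card_pi]
  rw [hcard]
  congr 1
  refine Finset.sum_congr rfl fun a _ => ?_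
  have : ∀ a' : Fin n → F,
      (if ∀ y ∈ (⊤ : Submodule F (Fin n → F)), ch φ (dotp (a - a') y) = 1
        then Q a * Q a' else 0) = (if a' = a then Q a * Q a' else 0) := by
    intro a'
    by_cases h : a' = a
    · subst h
      rw [if_pos rfl, if_pos]
      intro y _
      simp only [sub_self]
      have : dotp (0 : Fin n → F) y = 0 := by simp [dotp]
      rw [this, ch_zero]
    · rw [if_neg h, if_neg]
      intro hc
      obtain ⟨y, hy⟩ := exists_dot_ne_one φ ht (v := a - a') (sub_ne_zero.mpr (Ne.symm h))
      exact hy (hc y Submodule.mem_top)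
  rw [Finset.sum_congr rfl fun a' _ => this a']
  rw [Finset.sum_ite_eq' univ a (fun a' => Q a * Q a')]
  simp [sq]
end B
section C
variable {F : Type*} [Field F] [Fintype F] {n m : ℕ}

open Classical in
noncomputable def pushQ (f : (Fin n → F) → (Fin m → F)) (Q : (Fin n → F) → ℝ)
    (b : Fin m → F) : ℝ := ∑ a, if f a = b then Q a else 0

open Classical in
lemma sum_pushQ (f : (Fin n → F) → (Fin m → F)) (Q : (Fin n → F) → ℝ) :
    ∑ b, pushQ f Q b = ∑ a, Q a := by
  classical
  unfold pushQ
  rw [Finset.sum_comm]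
  refine Finset.sum_congr rfl fun a _ => ?_
  simp

open Classical in
lemma pushsq (f : (Fin n → F) → (Fin m → F)) (Q : (Fin n → F) → ℝ) :
    ∑ b, (pushQ f Q b) ^ 2 = ∑ a, ∑ a', if f a = f a' then Q a * Q a' else 0 := by
  classical
  unfold pushQ
  have : ∀ b, (∑ a, if f a = b then Q a else 0) ^ 2 =
      ∑ a, ∑ a', (if f a = b then Q a else 0) * (if f a' = b then Q a' else 0) := by
    intro b
    rw [sq, Finset.sum_mul_sum]
  rw [Finset.sum_congr rfl fun b _ => this b, Finset.sum_comm]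
  refine Finset.sum_congr rfl fun a _ => ?_
  rw [Finset.sum_comm]
  refine Finset.sum_congr rfl fun a' _ => ?_
  rw [Finset.sum_eq_single (f a)]
  · by_cases h : f a = f a'
    · rw [if_pos rfl, if_pos h, if_pos h.symm]
    · rw [if_pos rfl, if_neg h, if_neg (fun hh => h hh.symm), mul_zero]
  · intro b _ hb
    rw [if_neg (fun hh => hb hh.symm), zero_mul]
  · intro h; exact absurd (Finset.mem_univ _) h
end C
section D
variable {F : Type*} [Field F] [Fintype F] {n m : ℕ}

lemma apply_eq_sum (f : (Fin n → F) →ₗ[F] (Fin m → F)) (v : Fin n → F) (j : Fin m) :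
    f v j = ∑ i, v i * f (fun k => if i = k then 1 else 0) j := by
  conv_lhs => rw [LinearMap.pi_apply_eq_sum_univ f v]
  rw [Finset.sum_apply]
  refine Finset.sum_congr rfl fun i _ => ?_
  simp

lemma dot_g (f : (Fin n → F) →ₗ[F] (Fin m → F)) (z : Fin m → F) (v : Fin n → F) :
    dotp v (fun i => ∑ j, z j * f (fun k => if i = k then 1 else 0) j) =
      ∑ j, z j * f v j := by
  unfold dotp
  calc ∑ i, v i * ∑ j, z j * f (fun k => if i = k then 1 else 0) j
      = ∑ i, ∑ j, z j * (v i * f (fun k => if i = k then 1 else 0) j) := by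
        refine Finset.sum_congr rfl fun i _ => ?_
        rw [Finset.mul_sum]
        exact Finset.sum_congr rfl fun j _ => by ring
    _ = ∑ j, ∑ i, z j * (v i * f (fun k => if i = k then 1 else 0) j) := Finset.sum_comm
    _ = ∑ j, z j * f v j := by
        refine Finset.sum_congr rfl fun j _ => ?_
        rw [← Finset.mul_sum, apply_eq_sum f v j]

open Classical in
lemma card_dualSub_ge (f : (Fin n → F) →ₗ[F] (Fin m → F)) (hf : Function.Surjective f) :
    Fintype.card (Fin m → F) ≤
      (Finset.univ.filter (· ∈ dualSub (LinearMap.ker f))).card := by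
  classical
  set g : (Fin m → F) → (Fin n → F) :=
    fun z => fun i => ∑ j, z j * f (fun k => if i = k then 1 else 0) j with hg
  rw [← Finset.card_univ]
  apply Finset.card_le_card_of_injOn g
  · intro z _
    simp only [Finset.mem_coe, Finset.mem_filter, Finset.mem_univ, true_and]
    intro v hv
    have hfv : f v = 0 := hv
    rw [hg, dot_g f z v, hfv]
    simp
  · intro z _ z' _ hzz
    funext j₀
    obtain ⟨v, hv⟩ := hf (fun k => if j₀ = k then 1 else 0)
    have h1 : dotp v (g z) = dotp v (g z') := by rw [hzz]
    rw [hg] at h1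
    simp only at h1
    rw [dot_g f z v, dot_g f z' v, hv] at h1
    have h2 : ∀ y : Fin m → F, ∑ j, y j * (if j₀ = j then (1:F) else 0) = y j₀ := by
      intro y
      rw [Finset.sum_eq_single j₀]
      · simp
      · intro b _ hb; rw [if_neg (fun hh => hb hh.symm), mul_zero]
      · intro h; exact absurd (Finset.mem_univ _) h
    rw [h2 z, h2 z'] at h1
    exact h1
end D
section E
variable {F : Type*} [Field F] [Fintype F] {n m : ℕ} (φ : Multiplicative F →* ℂˣ)

lemma dotp_zero_right (a : Fin n → F) : dotp a 0 = 0 := by simp [dotp]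

lemma qhat_zero (Q : (Fin n → F) → ℝ) : qhat φ Q 0 = ((∑ a, Q a : ℝ) : ℂ) := by
  unfold qhat
  push_cast
  refine Finset.sum_congr rfl fun a _ => ?_
  rw [dotp_zero_right, ch_zero, mul_one]

set_option maxHeartbeats 1000000 in
open Classical in
lemma l2_perx (f : (Fin n → F) →ₗ[F] (Fin m → F)) (hf : Function.Surjective f)
    (Q : (Fin n → F) → ℝ) (hQ0 : ∀ a, 0 ≤ Q a) :
    ∑ b, (pushQ f Q b - (∑ a, Q a) / (Fintype.card F : ℝ) ^ m) ^ 2 ≤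
      (1 / (Fintype.card F : ℝ) ^ m) *
        ∑ y ∈ Finset.univ.filter (fun y => y ≠ 0),
          (if (∀ v, f v = 0 → dotp v y = 0) then ‖qhat φ Q y‖ ^ 2 else 0) := by
  classical
  set Mr : ℝ := (Fintype.card F : ℝ) ^ m with hMr
  have hMpos : 0 < Mr := by positivity
  have hMB : (Fintype.card (Fin m → F) : ℝ) = Mr := by
    rw [hMr]; norm_cast; simp [Fintype.card_pi]
  set W := dualSub (LinearMap.ker f) with hW
  set Wf := Finset.univ.filter (· ∈ W) with hWf
  have hNM : Mr ≤ (Wf.card : ℝ) := by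
    rw [← hMB]
    exact_mod_cast card_dualSub_ge f hf
  have hNpos : (0:ℝ) < Wf.card := lt_of_lt_of_le hMpos hNM
  set SQ : ℝ := ∑ a, Q a with hSQ
  -- Step 1
  have step1 : ∑ b, (pushQ f Q b - SQ / Mr) ^ 2 = (∑ b, (pushQ f Q b)^2) - SQ^2 / Mr := by
    have expand : ∀ b, (pushQ f Q b - SQ / Mr) ^ 2 =
        (pushQ f Q b)^2 - 2 * (SQ / Mr) * pushQ f Q b + (SQ/Mr)^2 := by intro b; ring
    rw [Finset.sum_congr rfl fun b _ => expand b]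
    rw [Finset.sum_add_distrib, Finset.sum_sub_distrib, ← Finset.mul_sum, sum_pushQ,
      Finset.sum_const, Finset.card_univ, nsmul_eq_mul, hMB, ← hSQ]
    field_simp
    ring
  -- Step 2
  have step2 : ∑ b, (pushQ f Q b)^2 ≤ (1 / Wf.card) * ∑ y ∈ Wf, ‖qhat φ Q y‖ ^ 2 := by
    rw [sum_normSq_qhat φ W Q, ← hWf, pushsq]
    rw [← mul_assoc, one_div, inv_mul_cancel₀ (ne_of_gt hNpos), one_mul]
    refine Finset.sum_le_sum fun a _ => Finset.sum_le_sum fun a' _ => ?_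
    by_cases h : f a = f a'
    · rw [if_pos h, if_pos]
      intro y hy
      have hker : a - a' ∈ LinearMap.ker f := by
        rw [LinearMap.mem_ker, map_sub, h, sub_self]
      rw [hy (a - a') hker, ch_zero]
    · rw [if_neg h]
      split_ifs with h2
      · exact mul_nonneg (hQ0 a) (hQ0 a')
      · exact le_rfl
  -- Step 3: split off y = 0
  have h0mem : (0 : Fin n → F) ∈ Wf := by
    simp only [hWf, Finset.mem_filter, Finset.mem_univ, true_and]
    exact W.zero_mem
  have step3 : ∑ y ∈ Wf, ‖qhat φ Q y‖ ^ 2 =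
      SQ ^ 2 + ∑ y ∈ Wf.erase 0, ‖qhat φ Q y‖ ^ 2 := by
    rw [← Finset.add_sum_erase _ _ h0mem, qhat_zero]
    congr 1
    rw [Complex.norm_real]
    exact sq_abs SQ
  -- Step 4: assemble
  have hS'nonneg : 0 ≤ ∑ y ∈ Wf.erase 0, ‖qhat φ Q y‖ ^ 2 :=
    Finset.sum_nonneg fun y _ => sq_nonneg _
  have step4 : ∑ b, (pushQ f Q b - SQ / Mr) ^ 2 ≤
      (1 / Mr) * ∑ y ∈ Wf.erase 0, ‖qhat φ Q y‖ ^ 2 := by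
    rw [step1]
    have h1 : (∑ b, (pushQ f Q b)^2) - SQ^2/Mr ≤
        (1 / Wf.card) * (SQ ^ 2 + ∑ y ∈ Wf.erase 0, ‖qhat φ Q y‖ ^ 2) - SQ^2/Mr := by
      have := step2
      rw [step3] at this
      linarith
    refine le_trans h1 ?_
    have hA : (1 / (Wf.card:ℝ)) * SQ^2 - SQ^2/Mr ≤ 0 := by
      have : (1 / (Wf.card:ℝ)) ≤ 1 / Mr := by
        apply one_div_le_one_div_of_le hMpos hNM
      have hsq : (0:ℝ) ≤ SQ^2 := sq_nonneg _
      have := mul_le_mul_of_nonneg_right this hsq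
      calc (1 / (Wf.card:ℝ)) * SQ^2 - SQ^2/Mr ≤ (1/Mr) * SQ^2 - SQ^2/Mr := by linarith
        _ = 0 := by field_simp; ring
    have hB : (1 / (Wf.card:ℝ)) * (∑ y ∈ Wf.erase 0, ‖qhat φ Q y‖ ^ 2) ≤
        (1 / Mr) * (∑ y ∈ Wf.erase 0, ‖qhat φ Q y‖ ^ 2) := by
      apply mul_le_mul_of_nonneg_right _ hS'nonneg
      exact one_div_le_one_div_of_le hMpos hNM
    calc (1 / (Wf.card:ℝ)) * (SQ ^ 2 + ∑ y ∈ Wf.erase 0, ‖qhat φ Q y‖ ^ 2) - SQ^2/Mr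
        = ((1 / (Wf.card:ℝ)) * SQ^2 - SQ^2/Mr) +
          (1 / (Wf.card:ℝ)) * (∑ y ∈ Wf.erase 0, ‖qhat φ Q y‖ ^ 2) := by ring
      _ ≤ (1 / Mr) * (∑ y ∈ Wf.erase 0, ‖qhat φ Q y‖ ^ 2) := by linarith
  -- Step 5: rewrite the erase-sum as the target sum
  refine le_trans step4 (le_of_eq ?_)
  congr 1
  rw [← Finset.sum_filter, Finset.filter_filter]
  apply Finset.sum_congr _ (fun y _ => rfl)
  ext y
  simp only [Finset.mem_erase, hWf, Finset.mem_filter, Finset.mem_univ, true_and]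
  constructor
  · rintro ⟨hy0, hyW⟩
    exact ⟨hy0, fun v hv => hyW v (LinearMap.mem_ker.mpr hv)⟩
  · rintro ⟨hy0, hyW⟩
    exact ⟨hy0, fun v hv => hyW v (LinearMap.mem_ker.mp hv)⟩
end E
section G
variable {F : Type*} [Field F] [Fintype F] {n m : ℕ} (φ : Multiplicative F →* ℂˣ)

open Classical in
set_option maxHeartbeats 2000000 in
lemma expected_l2 {X : Type*} [Fintype X] (w : X → ℝ)
    (hw0 : ∀ x, 0 ≤ w x)
    (f : X → ((Fin n → F) →ₗ[F] (Fin m → F))) (hfsurj : ∀ x, Function.Surjective (f x))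
    (ε : ℝ) (hε : 0 ≤ ε)
    (hdu : ∀ y : Fin n → F, y ≠ 0 →
      prOf w (fun x => ∀ v : Fin n → F, f x v = 0 → ∑ i, v i * y i = 0) ≤
        ε * (Fintype.card F : ℝ) ^ m / (Fintype.card F : ℝ) ^ n)
    {t₀ : F} (ht : ch φ t₀ ≠ 1)
    (Q : (Fin n → F) → ℝ) (hQ0 : ∀ a, 0 ≤ Q a) :
    ∑ x, w x * ∑ b, (pushQ (f x) Q b - (∑ a, Q a) / (Fintype.card F : ℝ) ^ m) ^ 2 ≤
      ε * ∑ a, (Q a) ^ 2 := by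
  classical
  set Mr : ℝ := (Fintype.card F : ℝ) ^ m with hMr
  set qn : ℝ := (Fintype.card F : ℝ) ^ n with hqn
  have hMpos : 0 < Mr := by positivity
  have hqnpos : 0 < qn := by positivity
  set T : X → ℝ := fun x => ∑ y ∈ Finset.univ.filter (fun y => y ≠ (0 : Fin n → F)),
    (if (∀ v, f x v = 0 → dotp v y = 0) then ‖qhat φ Q y‖ ^ 2 else 0) with hT
  have h1 : ∑ x, w x * ∑ b, (pushQ (f x) Q b - (∑ a, Q a) / Mr) ^ 2 ≤
      ∑ x, w x * ((1 / Mr) * T x) := by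
    refine Finset.sum_le_sum fun x _ => ?_
    exact mul_le_mul_of_nonneg_left (l2_perx φ (f x) (hfsurj x) Q hQ0) (hw0 x)
  refine le_trans h1 ?_
  have h2 : ∑ x, w x * ((1 / Mr) * T x) = (1 / Mr) *
      ∑ y ∈ Finset.univ.filter (fun y => y ≠ (0 : Fin n → F)),
        (prOf w (fun x => ∀ v : Fin n → F, f x v = 0 → ∑ i, v i * y i = 0)) *
          ‖qhat φ Q y‖ ^ 2 := by
    have : ∀ x, w x * ((1 / Mr) * T x) = (1/Mr) * ∑ y ∈ Finset.univ.filter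
        (fun y => y ≠ (0 : Fin n → F)),
        (if (∀ v, f x v = 0 → dotp v y = 0) then w x else 0) * ‖qhat φ Q y‖ ^ 2 := by
      intro x
      simp only [hT, Finset.mul_sum]
      refine Finset.sum_congr rfl fun y _ => ?_
      split_ifs <;> ring
    calc ∑ x, w x * ((1 / Mr) * T x)
        = ∑ x, (1/Mr) * ∑ y ∈ Finset.univ.filter (fun y => y ≠ (0 : Fin n → F)),
            (if (∀ v, f x v = 0 → dotp v y = 0) then w x else 0) * ‖qhat φ Q y‖ ^ 2 :=
          Finset.sum_congr rfl fun x _ => this x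
      _ = (1/Mr) * ∑ x, ∑ y ∈ Finset.univ.filter (fun y => y ≠ (0 : Fin n → F)),
            (if (∀ v, f x v = 0 → dotp v y = 0) then w x else 0) * ‖qhat φ Q y‖ ^ 2 :=
          (Finset.mul_sum _ _ _).symm
      _ = (1/Mr) * ∑ y ∈ Finset.univ.filter (fun y => y ≠ (0 : Fin n → F)), ∑ x,
            (if (∀ v, f x v = 0 → dotp v y = 0) then w x else 0) * ‖qhat φ Q y‖ ^ 2 := by
          rw [Finset.sum_comm]
      _ = (1/Mr) * ∑ y ∈ Finset.univ.filter (fun y => y ≠ (0 : Fin n → F)),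
            (prOf w (fun x => ∀ v : Fin n → F, f x v = 0 → ∑ i, v i * y i = 0)) *
              ‖qhat φ Q y‖ ^ 2 := by
          congr 1
          refine Finset.sum_congr rfl fun y _ => ?_
          rw [← Finset.sum_mul]
          congr 1
          rw [prOf]
          refine Finset.sum_congr rfl fun x _ => ?_
          unfold dotp
          by_cases h : (∀ v : Fin n → F, f x v = 0 → ∑ i, v i * y i = 0)
          · rw [if_pos h, if_pos h]
          · rw [if_neg h, if_neg h]
  rw [h2]
  have h3 : ∑ y ∈ Finset.univ.filter (fun y => y ≠ (0 : Fin n → F)),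
      (prOf w (fun x => ∀ v : Fin n → F, f x v = 0 → ∑ i, v i * y i = 0)) *
        ‖qhat φ Q y‖ ^ 2 ≤
      (ε * Mr / qn) * ∑ y, ‖qhat φ Q y‖ ^ 2 := by
    calc ∑ y ∈ Finset.univ.filter (fun y => y ≠ (0 : Fin n → F)),
        (prOf w (fun x => ∀ v : Fin n → F, f x v = 0 → ∑ i, v i * y i = 0)) *
          ‖qhat φ Q y‖ ^ 2
        ≤ ∑ y ∈ Finset.univ.filter (fun y => y ≠ (0 : Fin n → F)),
          (ε * Mr / qn) * ‖qhat φ Q y‖ ^ 2 := by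
          refine Finset.sum_le_sum fun y hy => ?_
          have hy0 : y ≠ 0 := by
            simpa using (Finset.mem_filter.mp hy).2
          exact mul_le_mul_of_nonneg_right (hdu y hy0) (sq_nonneg _)
      _ ≤ ∑ y, (ε * Mr / qn) * ‖qhat φ Q y‖ ^ 2 := by
          refine Finset.sum_le_sum_of_subset_of_nonneg (Finset.filter_subset _ _)
            fun y _ _ => ?_
          have : (0:ℝ) ≤ ε * Mr / qn := by positivity
          positivity
      _ = (ε * Mr / qn) * ∑ y, ‖qhat φ Q y‖ ^ 2 := by rw [Finset.mul_sum]
  have h4 : (1/Mr) * ((ε * Mr / qn) * ∑ y, ‖qhat φ Q y‖ ^ 2) = ε * ∑ a, Q a ^ 2 := by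
    rw [parseval φ ht Q, ← hqn]
    field_simp
  calc (1/Mr) * ∑ y ∈ Finset.univ.filter (fun y => y ≠ (0 : Fin n → F)),
      (prOf w (fun x => ∀ v : Fin n → F, f x v = 0 → ∑ i, v i * y i = 0)) *
        ‖qhat φ Q y‖ ^ 2
      ≤ (1/Mr) * ((ε * Mr / qn) * ∑ y, ‖qhat φ Q y‖ ^ 2) := by
        apply mul_le_mul_of_nonneg_left h3 (by positivity)
    _ = ε * ∑ a, Q a ^ 2 := h4
end G

-- nontrivial character of the additive group of a finite field into ℂˣ
lemma exists_char (F : Type*) [Field F] [Fintype F] :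
    ∃ φ : Multiplicative F →* ℂˣ, ∃ t : F, ch φ t ≠ 1 := by
  haveI : Finite (Multiplicative F) := inferInstanceAs (Finite F)
  have hexp : (Monoid.exponent (Multiplicative F)) ≠ 0 :=
    Monoid.exponent_ne_zero_of_finite
  haveI : NeZero ((Monoid.exponent (Multiplicative F) : ℂ)) :=
    ⟨by exact_mod_cast hexp⟩
  have h1 : (Multiplicative.ofAdd (1 : F)) ≠ (1 : Multiplicative F) := by
    simp only [ne_eq]
    intro h
    exact one_ne_zero (α := F) (by simpa using h)
  obtain ⟨φ, hφ⟩ := CommGroup.exists_apply_ne_one_of_hasEnoughRootsOfUnity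
    (Multiplicative F) ℂ h1
  refine ⟨φ, 1, fun h => hφ (Units.ext ?_)⟩
  simpa [ch] using h
section H
variable {F : Type*} [Field F] [Fintype F] {n m : ℕ}

-- weighted Cauchy-Schwarz / Jensen for sqrt
lemma jensen_sqrt {X : Type*} [Fintype X] (w V : X → ℝ) (hw0 : ∀ x, 0 ≤ w x)
    (hw1 : ∑ x, w x = 1) (hV0 : ∀ x, 0 ≤ V x) :
    ∑ x, w x * Real.sqrt (V x) ≤ Real.sqrt (∑ x, w x * V x) := by
  have key := Finset.sum_mul_sq_le_sq_mul_sq Finset.univ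
    (fun x => Real.sqrt (w x)) (fun x => Real.sqrt (w x * V x))
  have e1 : ∀ x : X, Real.sqrt (w x) * Real.sqrt (w x * V x) = w x * Real.sqrt (V x) := by
    intro x
    rw [Real.sqrt_mul (hw0 x), ← mul_assoc, Real.mul_self_sqrt (hw0 x)]
  have e2 : ∀ x : X, Real.sqrt (w x) ^ 2 = w x := fun x => Real.sq_sqrt (hw0 x)
  have e3 : ∀ x : X, Real.sqrt (w x * V x) ^ 2 = w x * V x :=
    fun x => Real.sq_sqrt (mul_nonneg (hw0 x) (hV0 x))
  rw [Finset.sum_congr rfl fun x _ => e1 x, Finset.sum_congr rfl fun x _ => e2 x,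
    Finset.sum_congr rfl fun x _ => e3 x, hw1, one_mul] at key
  have h0 : 0 ≤ ∑ x, w x * Real.sqrt (V x) :=
    Finset.sum_nonneg fun x _ => mul_nonneg (hw0 x) (Real.sqrt_nonneg _)
  calc ∑ x, w x * Real.sqrt (V x)
      = Real.sqrt ((∑ x, w x * Real.sqrt (V x)) ^ 2) := (Real.sqrt_sq h0).symm
    _ ≤ Real.sqrt (∑ x, w x * V x) := Real.sqrt_le_sqrt key

lemma cs_abs {B : Type*} [Fintype B] (d : B → ℝ) :
    ∑ b, |d b| ≤ Real.sqrt ((Fintype.card B : ℝ) * ∑ b, (d b) ^ 2) := by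
  have key := Finset.sum_mul_sq_le_sq_mul_sq Finset.univ
    (fun _ : B => (1:ℝ)) (fun b => |d b|)
  simp only [one_mul, one_pow, sq_abs] at key
  rw [Finset.sum_const, Finset.card_univ, nsmul_eq_mul, mul_one] at key
  have h0 : 0 ≤ ∑ b, |d b| := Finset.sum_nonneg fun b _ => abs_nonneg _
  calc ∑ b, |d b| = Real.sqrt ((∑ b, |d b|) ^ 2) := (Real.sqrt_sq h0).symm
    _ ≤ _ := Real.sqrt_le_sqrt key

open Classical in
lemma per_e {X : Type*} [Fintype X] (w : X → ℝ)
    (hw0 : ∀ x, 0 ≤ w x) (hw1 : ∑ x, w x = 1)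
    (f : X → ((Fin n → F) →ₗ[F] (Fin m → F))) (hfsurj : ∀ x, Function.Surjective (f x))
    (ε : ℝ) (hε : 0 ≤ ε)
    (hdu : ∀ y : Fin n → F, y ≠ 0 →
      prOf w (fun x => ∀ v : Fin n → F, f x v = 0 → ∑ i, v i * y i = 0) ≤
        ε * (Fintype.card F : ℝ) ^ m / (Fintype.card F : ℝ) ^ n)
    (s : ℝ) (hs0 : 0 < s) (hs1 : s ≤ 1 / 2)
    (R : (Fin n → F) → ℝ) (hR0 : ∀ a, 0 ≤ R a) :
    ∑ x, w x * ∑ b, |pushQ (f x) R b - (∑ a, R a) / (Fintype.card F : ℝ) ^ m| ≤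
      (2 + Real.sqrt ε) * ((Fintype.card F : ℝ) ^ m) ^ s *
        (∑ a, R a ^ (1 / (1 - s))) ^ (1 - s) := by
  classical
  obtain ⟨φ, t₀, ht⟩ := exists_char F
  set Mr : ℝ := (Fintype.card F : ℝ) ^ m with hMr
  have hMpos : 0 < Mr := by positivity
  have h1s : 0 < 1 - s := by linarith
  set r : ℝ := 1 / (1 - s) with hr
  have hrpos : 0 < r := by positivity
  have hr1 : 1 ≤ r := by rw [hr, le_div_iff₀ h1s]; linarith
  have hr2 : r ≤ 2 := by rw [hr, div_le_iff₀ h1s]; linarith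
  set K : ℝ := ∑ a, R a ^ r with hK
  have hK0 : 0 ≤ K := Finset.sum_nonneg fun a _ => Real.rpow_nonneg (hR0 a) r
  rcases eq_or_lt_of_le hK0 with hKzero | hKpos
  · -- K = 0 : everything vanishes
    have hRz : ∀ a, R a = 0 := by
      intro a
      have := (Finset.sum_eq_zero_iff_of_nonneg
        (fun a _ => Real.rpow_nonneg (hR0 a) r)).mp hKzero.symm a (Finset.mem_univ a)
      by_contra hne
      have hpos : 0 < R a := lt_of_le_of_ne (hR0 a) (Ne.symm hne)
      exact absurd this (ne_of_gt (Real.rpow_pos_of_pos hpos r))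
    have hpush : ∀ (x : X) b, pushQ (f x) R b = 0 := by
      intro x b
      unfold pushQ
      exact Finset.sum_eq_zero fun a _ => by rw [hRz a]; split_ifs <;> rfl
    have hsum : (∑ a, R a) = 0 := Finset.sum_eq_zero fun a _ => hRz a
    have hlhs : ∑ x, w x * ∑ b, |pushQ (f x) R b - (∑ a, R a) / Mr| = 0 := by
      refine Finset.sum_eq_zero fun x _ => ?_
      rw [Finset.sum_eq_zero fun b _ => by rw [hpush x b, hsum]; simp, mul_zero]
    rw [hlhs, ← hKzero, Real.zero_rpow (ne_of_gt h1s), mul_zero]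
  · -- main case K > 0
    set c : ℝ := Mr ^ (s - 1) * K ^ (1 - s) with hc
    have hcpos : 0 < c :=
      mul_pos (Real.rpow_pos_of_pos hMpos _) (Real.rpow_pos_of_pos hKpos _)
    set R1 : (Fin n → F) → ℝ := fun a => min (R a) c with hR1
    set R2 : (Fin n → F) → ℝ := fun a => R a - R1 a with hR2
    have hR10 : ∀ a, 0 ≤ R1 a := fun a => le_min (hR0 a) hcpos.le
    have hR20 : ∀ a, 0 ≤ R2 a := fun a => by
      simp only [hR2, hR1, sub_nonneg]; exact min_le_left _ _
    -- rpow algebra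
    have hcrw : ∀ u : ℝ, c ^ u = Mr ^ ((s-1)*u) * K ^ ((1-s)*u) := by
      intro u
      rw [hc, Real.mul_rpow (Real.rpow_nonneg hMpos.le _) (Real.rpow_nonneg hKpos.le _),
        ← Real.rpow_mul hMpos.le, ← Real.rpow_mul hKpos.le]
    have e1 : (s-1)*(1-r) = s := by rw [hr]; field_simp; ring
    have e2 : (1-s)*(1-r) = -s := by rw [hr]; field_simp; ring
    have e3 : (s-1)*(2-r) = 2*s-1 := by rw [hr]; field_simp; ring
    have e4 : (1-s)*(2-r) = 1-2*s := by rw [hr]; field_simp; ring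
    have idA : c ^ (1-r) * K = Mr ^ s * K ^ (1-s) := by
      calc c ^ (1-r) * K = Mr ^ s * (K ^ (-s) * K ^ (1:ℝ)) := by
            rw [hcrw, e1, e2, Real.rpow_one]; ring
        _ = Mr ^ s * K ^ (1-s) := by
            rw [← Real.rpow_add hKpos, show -s + 1 = 1 - s by ring]
    have idB : Mr * (c ^ (2-r) * K) = (Mr ^ s * K ^ (1-s))^2 := by
      have lhs : Mr * (c ^ (2-r) * K) = Mr ^ (2*s) * K ^ (2-2*s) := by
        calc Mr * (c ^ (2-r) * K)
            = Mr ^ (1:ℝ) * Mr ^ (2*s-1) * (K ^ (1-2*s) * K ^ (1:ℝ)) := by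
              rw [hcrw, e3, e4, Real.rpow_one, Real.rpow_one]; ring
          _ = Mr ^ (2*s) * K ^ (2-2*s) := by
              rw [← Real.rpow_add hMpos, ← Real.rpow_add hKpos,
                show (1:ℝ) + (2*s-1) = 2*s by ring, show 1-2*s+1 = 2-2*s by ring]
      have rhs : (Mr ^ s * K ^ (1-s))^2 = Mr ^ (2*s) * K ^ (2-2*s) := by
        calc (Mr ^ s * K ^ (1-s))^2
            = (Mr ^ s * Mr ^ s) * (K ^ (1-s) * K ^ (1-s)) := by ring
          _ = Mr ^ (s+s) * K ^ ((1-s)+(1-s)) := by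
              rw [← Real.rpow_add hMpos, ← Real.rpow_add hKpos]
          _ = Mr ^ (2*s) * K ^ (2-2*s) := by
              rw [show s+s = 2*s by ring, show (1-s)+(1-s) = 2-2*s by ring]
      rw [lhs, rhs]
    -- bound on the large part
    have hsumR2 : ∑ a, R2 a ≤ c ^ (1-r) * K := by
      have point : ∀ a, R2 a ≤ R a ^ r * c ^ (1-r) := by
        intro a
        by_cases hac : R a ≤ c
        · have : R2 a = 0 := by simp only [hR2, hR1, min_eq_left hac, sub_self]
          rw [this]
          exact mul_nonneg (Real.rpow_nonneg (hR0 a) r) (Real.rpow_nonneg hcpos.le _)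
        · push_neg at hac
          have hRapos : 0 < R a := hcpos.trans hac
          have hmin : R1 a = c := by simp only [hR1, min_eq_right hac.le]
          have hRsplit : R a = R a ^ r * R a ^ (1-r) := by
            rw [← Real.rpow_add hRapos, show r + (1-r) = 1 by ring, Real.rpow_one]
          have hmono : R a ^ (1-r) ≤ c ^ (1-r) :=
            Real.rpow_le_rpow_of_nonpos hcpos hac.le (by linarith)
          calc R2 a = R a - c := by rw [hR2]; simp only [hmin]
            _ ≤ R a := by linarith [hcpos]
            _ = R a ^ r * R a ^ (1-r) := hRsplit
            _ ≤ R a ^ r * c ^ (1-r) :=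
                mul_le_mul_of_nonneg_left hmono (Real.rpow_nonneg (hR0 a) r)
      calc ∑ a, R2 a ≤ ∑ a, R a ^ r * c ^ (1-r) := Finset.sum_le_sum fun a _ => point a
        _ = c ^ (1-r) * K := by rw [hK, ← Finset.sum_mul]; ring
    -- bound on the square of the small part
    have hsumR1sq : ∑ a, (R1 a)^2 ≤ c ^ (2-r) * K := by
      have point : ∀ a, (R1 a)^2 ≤ R a ^ r * c ^ (2-r) := by
        intro a
        by_cases hac : R a ≤ c
        · have hmin : R1 a = R a := by simp only [hR1, min_eq_left hac]
          rcases eq_or_lt_of_le (hR0 a) with hz | hpos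
          · rw [hmin, ← hz]
            norm_num
            exact mul_nonneg (Real.rpow_nonneg (le_refl 0) r) (Real.rpow_nonneg hcpos.le _)
          · have hsq : (R a)^2 = R a ^ r * R a ^ (2-r) := by
              rw [← Real.rpow_add hpos, show r + (2-r) = 2 by ring]
              rw [show ((2:ℝ)) = ((2:ℕ):ℝ) by norm_num, Real.rpow_natCast]
            rw [hmin, hsq]
            exact mul_le_mul_of_nonneg_left
              (Real.rpow_le_rpow (hR0 a) hac (by linarith)) (Real.rpow_nonneg (hR0 a) r)
        · push_neg at hac
          have hmin : R1 a = c := by simp only [hR1, min_eq_right hac.le]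
          have hsq : c^2 = c ^ r * c ^ (2-r) := by
            rw [← Real.rpow_add hcpos, show r + (2-r) = 2 by ring]
            rw [show ((2:ℝ)) = ((2:ℕ):ℝ) by norm_num, Real.rpow_natCast]
          rw [hmin, hsq]
          exact mul_le_mul_of_nonneg_right
            (Real.rpow_le_rpow hcpos.le hac.le hrpos.le) (Real.rpow_nonneg hcpos.le _)
      calc ∑ a, (R1 a)^2 ≤ ∑ a, R a ^ r * c ^ (2-r) := Finset.sum_le_sum fun a _ => point a
        _ = c ^ (2-r) * K := by rw [hK, ← Finset.sum_mul]; ring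
    -- linearity of push
    have pushsplit : ∀ (x : X) b, pushQ (f x) R b = pushQ (f x) R1 b + pushQ (f x) R2 b := by
      intro x b
      unfold pushQ
      rw [← Finset.sum_add_distrib]
      refine Finset.sum_congr rfl fun a _ => ?_
      split_ifs
      · simp [hR2]
      · simp
    have sumsplit : ∑ a, R a = (∑ a, R1 a) + ∑ a, R2 a := by
      rw [← Finset.sum_add_distrib]
      exact Finset.sum_congr rfl fun a _ => by simp [hR2]
    have pushR2_nonneg : ∀ (x : X) b, 0 ≤ pushQ (f x) R2 b := by
      intro x b
      unfold pushQ
      exact Finset.sum_nonneg fun a _ => by split_ifs; exacts [hR20 a, le_refl 0]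
    -- split bound
    have hMB : (Fintype.card (Fin m → F) : ℝ) = Mr := by
      rw [hMr]; norm_cast; simp [Fintype.card_pi]
    have hsplit : ∀ x : X, ∑ b, |pushQ (f x) R b - (∑ a, R a) / Mr| ≤
        (∑ b, |pushQ (f x) R1 b - (∑ a, R1 a) / Mr|) + 2 * ∑ a, R2 a := by
      intro x
      have point : ∀ b, |pushQ (f x) R b - (∑ a, R a) / Mr| ≤
          |pushQ (f x) R1 b - (∑ a, R1 a) / Mr| + (pushQ (f x) R2 b + (∑ a, R2 a) / Mr) := by
        intro b
        have heq : pushQ (f x) R b - (∑ a, R a) / Mr =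
            (pushQ (f x) R1 b - (∑ a, R1 a) / Mr) +
              (pushQ (f x) R2 b - (∑ a, R2 a) / Mr) := by
          rw [pushsplit x b, sumsplit]; ring
        rw [heq]
        refine le_trans (abs_add_le _ _) ?_
        have h2 : |pushQ (f x) R2 b - (∑ a, R2 a) / Mr| ≤
            pushQ (f x) R2 b + (∑ a, R2 a) / Mr := by
          rw [abs_sub_le_iff]
          constructor
          · have : 0 ≤ (∑ a, R2 a) / Mr :=
              div_nonneg (Finset.sum_nonneg fun a _ => hR20 a) hMpos.le
            linarith
          · have := pushR2_nonneg x b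
            linarith
        linarith
      calc ∑ b, |pushQ (f x) R b - (∑ a, R a) / Mr|
          ≤ ∑ b, (|pushQ (f x) R1 b - (∑ a, R1 a) / Mr| +
              (pushQ (f x) R2 b + (∑ a, R2 a) / Mr)) := Finset.sum_le_sum fun b _ => point b
        _ = (∑ b, |pushQ (f x) R1 b - (∑ a, R1 a) / Mr|) + 2 * ∑ a, R2 a := by
            rw [Finset.sum_add_distrib, Finset.sum_add_distrib, sum_pushQ,
              Finset.sum_const, Finset.card_univ, nsmul_eq_mul, hMB]
            field_simp
            simp only [mul_comm Mr]
            ring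
    -- expectation of the L2 term
    set D : X → ℝ := fun x => ∑ b, (pushQ (f x) R1 b - (∑ a, R1 a) / Mr) ^ 2 with hD
    have hD0 : ∀ x, 0 ≤ D x := fun x => Finset.sum_nonneg fun b _ => sq_nonneg _
    have hexp : ∑ x, w x * D x ≤ ε * ∑ a, (R1 a)^2 :=
      expected_l2 φ w hw0 f hfsurj ε hε hdu ht R1 hR10
    -- small part: Cauchy-Schwarz + Jensen
    have hsmall : ∑ x, w x * ∑ b, |pushQ (f x) R1 b - (∑ a, R1 a) / Mr| ≤
        Real.sqrt ε * (Mr ^ s * K ^ (1-s)) := by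
      have step1 : ∀ x : X, ∑ b, |pushQ (f x) R1 b - (∑ a, R1 a) / Mr| ≤
          Real.sqrt (Mr * D x) := by
        intro x
        have := cs_abs (fun b => pushQ (f x) R1 b - (∑ a, R1 a) / Mr)
        rwa [hMB] at this
      have step2 : ∑ x, w x * ∑ b, |pushQ (f x) R1 b - (∑ a, R1 a) / Mr| ≤
          ∑ x, w x * Real.sqrt (Mr * D x) :=
        Finset.sum_le_sum fun x _ => mul_le_mul_of_nonneg_left (step1 x) (hw0 x)
      have step3 : ∑ x, w x * Real.sqrt (Mr * D x) ≤ Real.sqrt (∑ x, w x * (Mr * D x)) :=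
        jensen_sqrt w (fun x => Mr * D x) hw0 hw1 (fun x => mul_nonneg hMpos.le (hD0 x))
      have step4 : ∑ x, w x * (Mr * D x) = Mr * ∑ x, w x * D x := by
        rw [Finset.mul_sum]
        exact Finset.sum_congr rfl fun x _ => by ring
      have step5 : Mr * ∑ x, w x * D x ≤ Mr * (ε * (c ^ (2-r) * K)) := by
        apply mul_le_mul_of_nonneg_left _ hMpos.le
        exact le_trans hexp (mul_le_mul_of_nonneg_left hsumR1sq hε)
      have step6 : Mr * (ε * (c ^ (2-r) * K)) = ε * (Mr ^ s * K ^ (1-s))^2 := by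
        rw [← idB]; ring
      calc ∑ x, w x * ∑ b, |pushQ (f x) R1 b - (∑ a, R1 a) / Mr|
          ≤ ∑ x, w x * Real.sqrt (Mr * D x) := step2
        _ ≤ Real.sqrt (∑ x, w x * (Mr * D x)) := step3
        _ ≤ Real.sqrt (ε * (Mr ^ s * K ^ (1-s))^2) := by
            apply Real.sqrt_le_sqrt
            rw [step4, ← step6]
            exact step5
        _ = Real.sqrt ε * (Mr ^ s * K ^ (1-s)) := by
            rw [Real.sqrt_mul hε, Real.sqrt_sq]
            positivity
    -- assemble
    have final : ∑ x, w x * ∑ b, |pushQ (f x) R b - (∑ a, R a) / Mr| ≤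
        Real.sqrt ε * (Mr ^ s * K ^ (1-s)) + 2 * (Mr ^ s * K ^ (1-s)) := by
      calc ∑ x, w x * ∑ b, |pushQ (f x) R b - (∑ a, R a) / Mr|
          ≤ ∑ x, w x * ((∑ b, |pushQ (f x) R1 b - (∑ a, R1 a) / Mr|) + 2 * ∑ a, R2 a) :=
            Finset.sum_le_sum fun x _ => mul_le_mul_of_nonneg_left (hsplit x) (hw0 x)
        _ = (∑ x, w x * ∑ b, |pushQ (f x) R1 b - (∑ a, R1 a) / Mr|) +
              (∑ x, w x) * (2 * ∑ a, R2 a) := by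
            rw [Finset.sum_mul, ← Finset.sum_add_distrib]
            exact Finset.sum_congr rfl fun x _ => by ring
        _ ≤ Real.sqrt ε * (Mr ^ s * K ^ (1-s)) + 2 * (c ^ (1-r) * K) := by
            rw [hw1, one_mul]
            have := hsmall
            have h2 : 2 * ∑ a, R2 a ≤ 2 * (c ^ (1-r) * K) := by linarith
            linarith
        _ = Real.sqrt ε * (Mr ^ s * K ^ (1-s)) + 2 * (Mr ^ s * K ^ (1-s)) := by rw [idA]
    calc ∑ x, w x * ∑ b, |pushQ (f x) R b - (∑ a, R a) / Mr|
        ≤ Real.sqrt ε * (Mr ^ s * K ^ (1-s)) + 2 * (Mr ^ s * K ^ (1-s)) := final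
      _ = (2 + Real.sqrt ε) * Mr ^ s * K ^ (1-s) := by ring
      _ = (2 + Real.sqrt ε) * Mr ^ s * (∑ a, R a ^ (1 / (1 - s))) ^ (1-s) := by rw [← hr, ← hK]
end H

theorem stmt_14 {F : Type*} [Field F] [Fintype F] (n m : ℕ) (hm : 1 ≤ m) (hnm : m ≤ n)
    {E : Type*} [Fintype E] [Nonempty E]
    (P : (Fin n → F) × E → ℝ) (hP0 : ∀ x, 0 ≤ P x) (hP1 : ∑ x, P x ≤ 1)
    {X : Type*} [Fintype X] [Nonempty X] (w : X → ℝ)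
    (hw0 : ∀ x, 0 ≤ w x) (hw1 : ∑ x, w x = 1)
    (f : X → ((Fin n → F) →ₗ[F] (Fin m → F))) (hfsurj : ∀ x, Function.Surjective (f x))
    (ε : ℝ) (hε : 0 ≤ ε)
    (hdu : ∀ y : Fin n → F, y ≠ 0 →
      prOf w (fun x => ∀ v : Fin n → F, f x v = 0 → ∑ i, v i * y i = 0) ≤
        ε * (Fintype.card F : ℝ) ^ m / (Fintype.card F : ℝ) ^ n)
    (s : ℝ) (hs0 : 0 < s) (hs1 : s ≤ 1 / 2) :
    ∑ x, w x *
        ∑ b : Fin m → F, ∑ e : E,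
          |push (f x) P b e - (∑ a, P (a, e)) / (Fintype.card F : ℝ) ^ m| ≤
      (2 + Real.sqrt ε) * ((Fintype.card F : ℝ) ^ m) ^ s *
        ∑ e : E, (∑ a : Fin n → F, P (a, e) ^ (1 / (1 - s))) ^ (1 - s) := by
  classical
  have hpush : ∀ (x : X) (b : Fin m → F) (e : E),
      push (f x) P b e = pushQ (f x) (fun a => P (a, e)) b := by
    intro x b e
    unfold push pushQ
    exact Finset.sum_congr rfl fun a _ => by split_ifs <;> rfl
  have lhs_eq : ∑ x, w x * ∑ b : Fin m → F, ∑ e : E,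
        |push (f x) P b e - (∑ a, P (a, e)) / (Fintype.card F : ℝ) ^ m| =
      ∑ e : E, ∑ x, w x * ∑ b : Fin m → F,
        |pushQ (f x) (fun a => P (a, e)) b -
          (∑ a, P (a, e)) / (Fintype.card F : ℝ) ^ m| := by
    rw [Finset.sum_comm]
    refine Finset.sum_congr rfl fun x _ => ?_
    rw [← Finset.mul_sum]
    congr 1
    rw [Finset.sum_comm]
    exact Finset.sum_congr rfl fun e _ => Finset.sum_congr rfl fun b _ => by rw [hpush]
  rw [lhs_eq, Finset.mul_sum]
  refine Finset.sum_le_sum fun e _ => ?_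
  exact per_e w hw0 hw1 f hfsurj ε hε hdu s hs0 hs1 (fun a => P (a, e))
    (fun a => hP0 (a, e))
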